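/- If a simplicial complex on at least i+1 vertices is i-neighborly (every set of i vertices spans a face), then it is (i-2)-connected. -/

import Mathlib

/-- The geometric realization of an abstract simplicial complex `K` on a finite vertex
set `V`: convex combinations of vertices whose support is contained in a face. -/
def realization {V : Type*} [Fintype V] (K : Finset V → Prop) : Set (V → ℝ) :=
  {f | (∀ v, 0 ≤ f v) ∧ (∑ v, f v) = 1 ∧ ∃ S : Finset V, K S ∧ ∀ v ∉ S, f v = 0}

/-- A topological space `X` is `k`-connected if for every `0 ≤ n ≤ k`, every continuous map
from the `n`-sphere to `X` extends to the `(n+1)`-ball. -/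
def IsKConnected (X : Type*) [TopologicalSpace X] (k : ℤ) : Prop :=
  ∀ n : ℕ, (n : ℤ) ≤ k →
    ∀ f : C(Metric.sphere (0 : EuclideanSpace ℝ (Fin (n + 1))) 1, X),
      ∃ g : C(Metric.closedBall (0 : EuclideanSpace ℝ (Fin (n + 1))) 1, X),
        ∀ x (hx : x ∈ Metric.sphere (0 : EuclideanSpace ℝ (Fin (n + 1))) 1),
          g ⟨x, Metric.sphere_subset_closedBall hx⟩ = f ⟨x, hx⟩

namespace NeighborlyAux
variable {ι : Type*}


open Finset



/-- `max 0 (sup of f over s)`. -/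
noncomputable def mfold (s : Finset ι) (f : ι → ℝ) : ℝ := s.fold max 0 f

lemma mfold_nonneg (s : Finset ι) (f : ι → ℝ) : 0 ≤ mfold s f := by
  classical
  induction s using Finset.induction_on with
  | empty => simp [mfold]
  | @insert _ _ h ih => rw [mfold, Finset.fold_insert h]; exact le_trans ih (le_max_right _ _)

lemma le_mfold (s : Finset ι) (f : ι → ℝ) {j : ι} (hj : j ∈ s) : f j ≤ mfold s f := by
  classical
  induction s using Finset.induction_on with
  | empty => simp at hj
  | @insert a t h ih =>
    rw [mfold, Finset.fold_insert h]
    rcases Finset.mem_insert.1 hj with rfl | hj'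
    · exact le_max_left _ _
    · exact le_trans (ih hj') (le_max_right _ _)

lemma mfold_le (s : Finset ι) (f : ι → ℝ) {c : ℝ} (hc : 0 ≤ c)
    (h : ∀ j ∈ s, f j ≤ c) : mfold s f ≤ c := by
  classical
  induction s using Finset.induction_on with
  | empty => simpa [mfold] using hc
  | @insert a t ha ih =>
    rw [mfold, Finset.fold_insert ha]
    exact max_le (h a (mem_insert_self a t)) (ih fun j hj => h j (mem_insert_of_mem hj))

lemma mfold_insert [DecidableEq ι] {a : ι} {s : Finset ι} (h : a ∉ s) (f : ι → ℝ) :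
    mfold (insert a s) f = max (f a) (mfold s f) := by
  classical
  rw [mfold, Finset.fold_insert h]; rfl

lemma mfold_congr {s : Finset ι} {f g : ι → ℝ} (h : ∀ j ∈ s, f j = g j) :
    mfold s f = mfold s g := Finset.fold_congr h

lemma mfold_continuous {X : Type*} [TopologicalSpace X] (s : Finset ι) (F : ι → X → ℝ)
    (hF : ∀ j, Continuous (F j)) : Continuous fun x => mfold s (fun j => F j x) := by
  classical
  induction s using Finset.induction_on with
  | empty => simpa [mfold] using continuous_const
  | @insert a t ha ih =>
    simp only [mfold_insert ha]
    exact (hF a).max ih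

/-- Key combinatorial identity: the Freudenthal hat functions sum to 1. -/
lemma claimA [DecidableEq ι] (u : ι → ℝ) (hu0 : ∀ j, 0 ≤ u j) (hu1 : ∀ j, u j ≤ 1) :
    ∀ s : Finset ι,
      ∑ A ∈ s.powerset, max 0 (1 - mfold (s \ A) u - mfold A (fun j => 1 - u j)) = 1 := by
  intro s
  induction s using Finset.strongInduction with
  | _ s ih =>
    rcases s.eq_empty_or_nonempty with rfl | hs
    · simp [mfold]
    · obtain ⟨j0, hj0, hmax⟩ := Finset.exists_max_image s u hs
      have hrw : s = insert j0 (s.erase j0) := (Finset.insert_erase hj0).symm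
      set s' := s.erase j0 with hs'
      have hj0' : j0 ∉ s' := Finset.notMem_erase _ _
      have hsub : s' ⊂ s := Finset.erase_ssubset hj0
      have IH := ih s' hsub
      rw [hrw, Finset.sum_powerset_insert hj0']
      -- first sum: only A = ∅ contributes, with value 1 - u j0
      have h1 : ∑ A ∈ s'.powerset,
          max 0 (1 - mfold (insert j0 s' \ A) u - mfold A (fun j => 1 - u j)) = 1 - u j0 := by
        rw [Finset.sum_eq_single_of_mem (∅ : Finset ι) (Finset.empty_mem_powerset s')]
        · have : insert j0 s' \ (∅ : Finset ι) = insert j0 s' := by simp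
          rw [this, ← hrw]
          have hm : mfold s u = u j0 := by
            refine le_antisymm (mfold_le _ _ (hu0 j0) fun j hj => hmax j hj) (le_mfold _ _ hj0)
          have he : mfold (∅ : Finset ι) (fun j => 1 - u j) = 0 := rfl
          rw [he, hm, sub_zero, max_eq_right (sub_nonneg.2 (hu1 j0))]
        · intro A hA hAne
          have hAs : A ⊆ s' := Finset.mem_powerset.1 hA
          obtain ⟨j1, hj1⟩ := Finset.nonempty_of_ne_empty hAne
          have hj1s : j1 ∈ s := hrw ▸ Finset.mem_insert_of_mem (hAs hj1)
          have hMA : 1 - u j1 ≤ mfold A (fun j => 1 - u j) := by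
            simpa using le_mfold A (fun j => 1 - u j) hj1
          have hj0mem : j0 ∈ insert j0 s' \ A :=
            Finset.mem_sdiff.2 ⟨Finset.mem_insert_self _ _, fun h => hj0' (hAs h)⟩
          have hMs : u j0 ≤ mfold (insert j0 s' \ A) u := le_mfold _ _ hj0mem
          have := hmax j1 hj1s
          apply max_eq_left
          nlinarith
      -- second sum
      have h2 : ∑ A ∈ s'.powerset,
          max 0 (1 - mfold (insert j0 s' \ insert j0 A) u -
            mfold (insert j0 A) (fun j => 1 - u j)) = u j0 := by
        have hterm : ∀ A ∈ s'.powerset,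
            max 0 (1 - mfold (insert j0 s' \ insert j0 A) u -
              mfold (insert j0 A) (fun j => 1 - u j)) =
            (if A = ∅ then max 0 (u j0 - mfold s' u)
              else max 0 (1 - mfold (s' \ A) u - mfold A (fun j => 1 - u j))) := by
          intro A hA
          have hAs : A ⊆ s' := Finset.mem_powerset.1 hA
          have hj0A : j0 ∉ A := fun h => hj0' (hAs h)
          have hsd : insert j0 s' \ insert j0 A = s' \ A := by
            ext x
            simp only [Finset.mem_sdiff, Finset.mem_insert]
            constructor
            · rintro ⟨hx1 | hx1, hx2⟩
              · exact absurd (Or.inl hx1) hx2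
              · exact ⟨hx1, fun h => hx2 (Or.inr h)⟩
            · rintro ⟨hx1, hx2⟩
              exact ⟨Or.inr hx1, by rintro (rfl | h); exacts [hj0' hx1, hx2 h]⟩
          rw [hsd, mfold_insert hj0A]
          rcases eq_or_ne A ∅ with rfl | hAne
          · simp only [if_pos rfl]
            have : mfold (∅ : Finset ι) (fun j => 1 - u j) = 0 := rfl
            rw [Finset.sdiff_empty, this, max_eq_left (sub_nonneg.2 (hu1 j0))]
            simp only [if_true]
            congr 1
            ring
          · simp only [if_neg hAne]
            obtain ⟨j1, hj1⟩ := Finset.nonempty_of_ne_empty hAne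
            have hj1s : j1 ∈ s := hrw ▸ Finset.mem_insert_of_mem (hAs hj1)
            have h1u : 1 - u j1 ≤ mfold A (fun j => 1 - u j) := by
              simpa using le_mfold A (fun j => 1 - u j) hj1
            have : 1 - u j0 ≤ mfold A (fun j => 1 - u j) :=
              le_trans (by have := hmax j1 hj1s; linarith) h1u
            rw [max_eq_right this]
        rw [Finset.sum_congr rfl hterm]
        have hmle : mfold s' u ≤ u j0 :=
          mfold_le _ _ (hu0 j0) fun j hj => hmax j (hrw ▸ Finset.mem_insert_of_mem hj)
        have hsplit : ∀ F : Finset ι → ℝ,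
            ∑ A ∈ s'.powerset, F A = F ∅ + ∑ A ∈ s'.powerset.erase ∅, F A := fun F =>
          (Finset.add_sum_erase _ F (Finset.empty_mem_powerset s')).symm
        rw [hsplit, if_pos rfl]
        rw [hsplit] at IH
        have hIH0 : (0 : ℝ) ⊔ (1 - mfold (s' \ ∅) u - mfold ∅ (fun j => 1 - u j)) =
            1 - mfold s' u := by
          have he : mfold (∅ : Finset ι) (fun j => 1 - u j) = 0 := rfl
          rw [Finset.sdiff_empty, he, sub_zero, max_eq_right (by linarith [hu1 j0])]
        have hrest : ∑ A ∈ s'.powerset.erase ∅,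
            (if A = ∅ then (0:ℝ) ⊔ (u j0 - mfold s' u)
              else 0 ⊔ (1 - mfold (s' \ A) u - mfold A fun j => 1 - u j)) =
            ∑ A ∈ s'.powerset.erase ∅,
              (0 ⊔ (1 - mfold (s' \ A) u - mfold A fun j => 1 - u j)) :=
          Finset.sum_congr rfl fun A hA => if_neg (Finset.ne_of_mem_erase hA)
        rw [hrest]
        rw [hIH0] at IH
        have : ∑ A ∈ s'.powerset.erase ∅,
            ((0:ℝ) ⊔ (1 - mfold (s' \ A) u - mfold A fun j => 1 - u j)) = mfold s' u := by
          linarith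
        rw [this, max_eq_right (by linarith)]
        ring
      rw [h1, h2]; ring
section lam

variable [Fintype ι]

/-- Hat function of the Freudenthal triangulation of `ℝ^ι` at the lattice point `v`. -/
noncomputable def lam (y : ι → ℝ) (v : ι → ℤ) : ℝ :=
  max 0 (1 - mfold Finset.univ (fun j => y j - v j) - mfold Finset.univ (fun j => (v j : ℝ) - y j))

lemma lam_nonneg (y : ι → ℝ) (v : ι → ℤ) : 0 ≤ lam y v := le_max_left _ _

lemma lam_continuous {X : Type*} [TopologicalSpace X] (Y : X → ι → ℝ)
    (hY : ∀ j, Continuous fun x => Y x j) (v : ι → ℤ) :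
    Continuous fun x => lam (Y x) v := by
  apply Continuous.max continuous_const
  apply Continuous.sub
  · apply Continuous.sub continuous_const
    exact mfold_continuous _ _ fun j => (hY j).sub continuous_const
  · exact mfold_continuous _ _ fun j => continuous_const.sub (hY j)

lemma lam_pos_iff {y : ι → ℝ} {v : ι → ℤ} :
    0 < lam y v ↔ 0 < 1 - mfold Finset.univ (fun j => y j - v j) -
      mfold Finset.univ (fun j => (v j : ℝ) - y j) := by
  constructor
  · intro h
    by_contra hc
    push_neg at hc
    rw [lam, max_eq_left hc] at h
    exact lt_irrefl _ h
  · intro h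
    rw [lam, max_eq_right h.le]
    exact h

lemma lam_pos_bound {y : ι → ℝ} {v : ι → ℤ} (h : 0 < lam y v) (j : ι) :
    |y j - v j| < 1 := by
  have h1 : y j - v j ≤ mfold Finset.univ (fun j => y j - v j) := by
    simpa using le_mfold Finset.univ (fun j => y j - (v j : ℝ)) (Finset.mem_univ j)
  have h2 : (v j : ℝ) - y j ≤ mfold Finset.univ (fun j => (v j : ℝ) - y j) := by
    simpa using le_mfold Finset.univ (fun j => (v j : ℝ) - y j) (Finset.mem_univ j)
  have h3 := mfold_nonneg Finset.univ (fun j => y j - (v j : ℝ))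
  have h4 := mfold_nonneg Finset.univ (fun j => (v j : ℝ) - y j)
  have h5 := lam_pos_iff.1 h
  rw [abs_lt]; constructor <;> linarith

lemma lam_pos_floor {y : ι → ℝ} {v : ι → ℤ} (h : 0 < lam y v) (j : ι) :
    v j = ⌊y j⌋ ∨ v j = ⌊y j⌋ + 1 := by
  have hb := lam_pos_bound h j
  rw [abs_lt] at hb
  have hfl : (⌊y j⌋ : ℝ) ≤ y j := Int.floor_le _
  have hfu : y j < (⌊y j⌋ : ℝ) + 1 := Int.lt_floor_add_one _
  have h5 : (⌊y j⌋ : ℝ) < (v j : ℝ) + 1 := by linarith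
  have h6 : (v j : ℝ) < (⌊y j⌋ : ℝ) + 2 := by linarith
  have hle : ⌊y j⌋ < v j + 1 := by exact_mod_cast h5
  have hge : v j < ⌊y j⌋ + 2 := by exact_mod_cast h6
  omega

/-- The finite set of lattice points near `y`. -/
noncomputable def box [DecidableEq ι] (y : ι → ℝ) : Finset (ι → ℤ) :=
  Fintype.piFinset fun j => ({⌊y j⌋, ⌊y j⌋ + 1} : Finset ℤ)

lemma lam_mem_box [DecidableEq ι] {y : ι → ℝ} {v : ι → ℤ} (h : lam y v ≠ 0) : v ∈ box y := by
  have hpos : 0 < lam y v := lt_of_le_of_ne (lam_nonneg y v) (Ne.symm h)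
  rw [box, Fintype.mem_piFinset]
  intro j
  rcases lam_pos_floor hpos j with h' | h' <;> simp [h']

end lam
section lamsum

variable [Fintype ι] [DecidableEq ι]

lemma lam_sum (y : ι → ℝ) : ∑ v ∈ box y, lam y v = 1 := by
  classical
  set u : ι → ℝ := fun j => y j - ⌊y j⌋ with hu
  have hu0 : ∀ j, 0 ≤ u j := fun j => sub_nonneg.2 (Int.floor_le _)
  have hu1 : ∀ j, u j ≤ 1 := fun j => by
    have := Int.lt_floor_add_one (y j); simp only [hu]; linarith
  have key := claimA u hu0 hu1 Finset.univ
  rw [← key]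
  symm
  refine Finset.sum_nbij' (i := fun A j => ⌊y j⌋ + if j ∈ A then 1 else 0)
    (j := fun v => Finset.univ.filter fun j => v j = ⌊y j⌋ + 1) ?_ ?_ ?_ ?_ ?_
  · intro A _
    rw [box, Fintype.mem_piFinset]
    intro j
    by_cases h : j ∈ A <;> simp [h]
  · intro v _
    exact Finset.mem_powerset.2 (Finset.subset_univ _)
  · intro A _
    ext j
    simp only [Finset.mem_filter, Finset.mem_univ, true_and]
    by_cases h : j ∈ A <;> simp [h]
  · intro v hv
    rw [box, Fintype.mem_piFinset] at hv
    funext j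
    rcases Finset.mem_insert.1 (hv j) with h | h
    · have : ¬ (v j = ⌊y j⌋ + 1) := by omega
      simp [this, h]
    · rw [Finset.mem_singleton] at h
      simp [h]
  · intro A _
    -- value equality
    have e1 : mfold Finset.univ (fun j => y j - ((⌊y j⌋ + if j ∈ A then 1 else 0 : ℤ) : ℝ)) =
        mfold (Finset.univ \ A) u := by
      apply le_antisymm
      · apply mfold_le _ _ (mfold_nonneg _ _)
        intro j _
        by_cases h : j ∈ A
        · simp only [h, if_true]
          push_cast
          have : y j - ((⌊y j⌋:ℝ) + 1) = u j - 1 := by simp only [hu]; ring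
          rw [this]
          linarith [hu1 j, mfold_nonneg (Finset.univ \ A) u]
        · simp only [h, if_false]
          push_cast
          have : y j - ((⌊y j⌋:ℝ) + 0) = u j := by simp only [hu]; ring
          rw [this]
          exact le_mfold _ _ (Finset.mem_sdiff.2 ⟨Finset.mem_univ j, h⟩)
      · apply mfold_le _ _ (mfold_nonneg _ _)
        intro j hj
        have hjA : j ∉ A := (Finset.mem_sdiff.1 hj).2
        have : u j = y j - ((⌊y j⌋ + if j ∈ A then 1 else 0 : ℤ) : ℝ) := by
          simp only [hjA, if_false, hu]; push_cast; ring
        rw [this]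
        exact le_mfold Finset.univ
          (fun j => y j - ((⌊y j⌋ + if j ∈ A then 1 else 0 : ℤ) : ℝ)) (Finset.mem_univ j)
    have e2 : mfold Finset.univ (fun j => ((⌊y j⌋ + if j ∈ A then 1 else 0 : ℤ) : ℝ) - y j) =
        mfold A (fun j => 1 - u j) := by
      apply le_antisymm
      · apply mfold_le _ _ (mfold_nonneg _ _)
        intro j _
        by_cases h : j ∈ A
        · simp only [h, if_true]
          push_cast
          have : (⌊y j⌋ : ℝ) + 1 - y j = 1 - u j := by simp only [hu]; ring
          rw [this]
          exact le_mfold A (fun j => 1 - u j) h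
        · simp only [h, if_false]
          push_cast
          have : (⌊y j⌋ : ℝ) + 0 - y j = -(u j) := by simp only [hu]; ring
          rw [this]
          linarith [hu0 j, mfold_nonneg A (fun j => 1 - u j)]
      · apply mfold_le _ _ (mfold_nonneg _ _)
        intro j hj
        have : 1 - u j = ((⌊y j⌋ + if j ∈ A then 1 else 0 : ℤ) : ℝ) - y j := by
          simp only [hj, if_true, hu]; push_cast; ring
        rw [this]
        exact le_mfold Finset.univ
          (fun j => ((⌊y j⌋ + if j ∈ A then 1 else 0 : ℤ) : ℝ) - y j) (Finset.mem_univ j)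
    rw [lam, e1, e2]

lemma lam_card_le (y : ι → ℝ) (P : Finset (ι → ℤ)) (hP : ∀ v ∈ P, 0 < lam y v) :
    P.card ≤ Fintype.card ι + 1 := by
  classical
  have hbox : ∀ v ∈ P, v ∈ box y := fun v hv => lam_mem_box (hP v hv).ne'
  -- the sets A_v form a chain
  set Av : (ι → ℤ) → Finset ι := fun v => Finset.univ.filter fun j => v j = ⌊y j⌋ + 1 with hAv
  have hchain : ∀ v ∈ P, ∀ v' ∈ P, Av v ⊆ Av v' ∨ Av v' ⊆ Av v := by
    intro v hv v' hv'
    by_contra hc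
    push_neg at hc
    obtain ⟨hc1, hc2⟩ := hc
    obtain ⟨j, hjv, hjv'⟩ := Finset.not_subset.1 hc1
    obtain ⟨j', hj'v', hj'v⟩ := Finset.not_subset.1 hc2
    simp only [hAv, Finset.mem_filter, Finset.mem_univ, true_and] at hjv hjv' hj'v' hj'v
    have hvj' : v j' = ⌊y j'⌋ := by
      rcases lam_pos_floor (hP v hv) j' with h | h
      · exact h
      · exact absurd h hj'v
    have hv'j : v' j = ⌊y j⌋ := by
      rcases lam_pos_floor (hP v' hv') j with h | h
      · exact h
      · exact absurd h hjv'
    have k1 := lam_pos_iff.1 (hP v hv)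
    have k2 := lam_pos_iff.1 (hP v' hv')
    set u : ι → ℝ := fun j => y j - ⌊y j⌋
    have b1 : y j' - (v j' : ℝ) ≤ mfold Finset.univ (fun j => y j - v j) := by
      simpa using le_mfold Finset.univ (fun j => y j - (v j : ℝ)) (Finset.mem_univ j')
    have b2 : (v j : ℝ) - y j ≤ mfold Finset.univ (fun j => (v j : ℝ) - y j) := by
      simpa using le_mfold Finset.univ (fun j => (v j : ℝ) - y j) (Finset.mem_univ j)
    have b3 : y j - (v' j : ℝ) ≤ mfold Finset.univ (fun j => y j - v' j) := by
      simpa using le_mfold Finset.univ (fun j => y j - (v' j : ℝ)) (Finset.mem_univ j)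
    have b4 : (v' j' : ℝ) - y j' ≤ mfold Finset.univ (fun j => (v' j : ℝ) - y j) := by
      simpa using le_mfold Finset.univ (fun j => (v' j : ℝ) - y j) (Finset.mem_univ j')
    rw [hvj'] at b1
    rw [hjv] at b2
    rw [hv'j] at b3
    rw [hj'v'] at b4
    push_cast at b1 b2 b3 b4
    linarith
  -- injectivity of cardinality
  have hcard := Finset.card_le_card_of_injOn
    (s := P) (t := Finset.range (Fintype.card ι + 1)) (fun v => (Av v).card) ?_ ?_
  · simpa using hcard
  · intro v hv
    simp only [Finset.coe_range, Set.mem_Iio, Finset.mem_range]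
    have : (Av v).card ≤ Fintype.card ι := by
      simpa [hAv] using Finset.card_filter_le Finset.univ _
    omega
  · intro v hv v' hv' heq
    simp only at heq
    have hAeq : Av v = Av v' := by
      rcases hchain v hv v' hv' with h | h
      · exact Finset.eq_of_subset_of_card_le h (le_of_eq heq.symm)
      · exact (Finset.eq_of_subset_of_card_le h (le_of_eq heq)).symm
    funext j
    have h1 := (Fintype.mem_piFinset.1 (hbox v hv)) j
    have h2 := (Fintype.mem_piFinset.1 (hbox v' hv')) j
    simp only [Finset.mem_insert, Finset.mem_singleton] at h1 h2
    by_cases hj : j ∈ Av v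
    · have hj' : j ∈ Av v' := hAeq ▸ hj
      simp only [hAv, Finset.mem_filter, Finset.mem_univ, true_and] at hj hj'
      rw [hj, hj']
    · have hj' : j ∉ Av v' := hAeq ▸ hj
      simp only [hAv, Finset.mem_filter, Finset.mem_univ, true_and] at hj hj'
      rcases h1 with h | h
      · rcases h2 with h' | h' 
        · rw [h, h']
        · exact absurd h' hj'
      · exact absurd h hj

end lamsum

lemma coord_le_norm {m : ℕ} (x : EuclideanSpace ℝ (Fin m)) (j : Fin m) : |x j| ≤ ‖x‖ := by
  rw [EuclideanSpace.norm_eq]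
  have h1 : |x j| = Real.sqrt (‖x j‖ ^ 2) := by
    rw [Real.norm_eq_abs, Real.sqrt_sq (abs_nonneg _)]
  rw [h1]
  exact Real.sqrt_le_sqrt
    (Finset.single_le_sum (f := fun i => ‖x i‖ ^ 2) (fun i _ => sq_nonneg _) (Finset.mem_univ j))

lemma norm_le_of_coord {m : ℕ} (x : EuclideanSpace ℝ (Fin m)) {c : ℝ} (hc : 0 ≤ c)
    (h : ∀ j, |x j| ≤ c) : ‖x‖ ≤ m * c := by
  rw [EuclideanSpace.norm_eq]
  have h1 : ∑ j, ‖x j‖ ^ 2 ≤ (m : ℝ) * c ^ 2 := by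
    calc ∑ j, ‖x j‖ ^ 2 ≤ ∑ _j : Fin m, c ^ 2 := by
          apply Finset.sum_le_sum
          intro j _
          rw [Real.norm_eq_abs]
          exact pow_le_pow_left₀ (abs_nonneg _) (h j) 2
      _ = (m : ℝ) * c ^ 2 := by
          rw [Finset.sum_const, Finset.card_univ, Fintype.card_fin, nsmul_eq_mul]
  have h2 : (m : ℝ) * c ^ 2 ≤ ((m : ℝ) * c) ^ 2 := by
    rcases Nat.eq_zero_or_pos m with hm | hm
    · simp [hm]
    · have : (1 : ℝ) ≤ m := by exact_mod_cast hm
      nlinarith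
  calc Real.sqrt (∑ j, ‖x j‖ ^ 2) ≤ Real.sqrt (((m : ℝ) * c) ^ 2) :=
        Real.sqrt_le_sqrt (h1.trans h2)
    _ = (m : ℝ) * c := Real.sqrt_sq (by positivity)

end NeighborlyAux

open NeighborlyAux

/-- If a simplicial complex on at least `i + 1` vertices is `i`-neighborly (every nonempty
set of at most `i` vertices is a face), then its realization is `(i-2)`-connected. -/
theorem neighborly_implies_connected {V : Type*} [Fintype V] (K : Finset V → Prop)
    (hcomplex : ∀ S T : Finset V, K S → T ⊆ S → T.Nonempty → K T)
    (i : ℕ) (hcard : i + 1 ≤ Fintype.card V)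
    (hneighborly : ∀ S : Finset V, S.Nonempty → S.card ≤ i → K S) :
    IsKConnected (realization K) ((i : ℤ) - 2) := by
  classical
  intro n hn f
  have hni : n + 2 ≤ i := by
    have : (n : ℤ) + 2 ≤ (i : ℤ) := by linarith
    exact_mod_cast this
  obtain ⟨v0⟩ : Nonempty V := Fintype.card_pos_iff.mp (by omega)
  set fc : (Metric.sphere (0 : EuclideanSpace ℝ (Fin (n + 1))) 1) → V → ℝ := fun p => ((f p : realization K) : V → ℝ) with hfc
  have hfccont : Continuous fc := continuous_subtype_val.comp f.continuous
  -- the open "star" covering of the sphere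
  have hopen : ∀ w : V, ∃ O : Set (EuclideanSpace ℝ (Fin (n + 1))), IsOpen O ∧
      Subtype.val ⁻¹' O = {p : (Metric.sphere (0 : EuclideanSpace ℝ (Fin (n + 1))) 1) | 0 < fc p w} := by
    intro w
    apply isOpen_induced_iff.1
    exact isOpen_Ioi.preimage ((continuous_apply w).comp hfccont)
  choose O hOopen hOpre using hopen
  have hcover : ((Metric.sphere (0 : EuclideanSpace ℝ (Fin (n + 1))) 1) : Set (EuclideanSpace ℝ (Fin (n + 1)))) ⊆ ⋃ w, O w := by
    intro x hx
    obtain ⟨hpos, hsum, -⟩ := (f ⟨x, hx⟩).2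
    have hex : ∃ w, 0 < fc ⟨x, hx⟩ w := by
      by_contra hc
      push_neg at hc
      have : ∑ w, fc ⟨x, hx⟩ w ≤ 0 := Finset.sum_nonpos fun w _ => hc w
      rw [hfc] at this
      simp only at this
      rw [hsum] at this
      linarith
    obtain ⟨w, hw⟩ := hex
    refine Set.mem_iUnion.2 ⟨w, ?_⟩
    have : (⟨x, hx⟩ : (Metric.sphere (0 : EuclideanSpace ℝ (Fin (n + 1))) 1)) ∈ Subtype.val ⁻¹' O w := by rw [hOpre w]; exact hw
    exact this
  obtain ⟨δ, hδ, hLeb⟩ :=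
    lebesgue_number_lemma_of_metric (isCompact_sphere (0 : (EuclideanSpace ℝ (Fin (n + 1)))) 1) hOopen hcover
  set ε : ℝ := δ / (4 * (n + 1)) with hε
  have hεpos : 0 < ε := by positivity
  have hεδ : ((n : ℝ) + 1) * (2 * ε) < δ := by
    rw [hε]
    have h1 : ((n : ℝ) + 1) * (2 * (δ / (4 * (n + 1)))) = δ / 2 := by
      field_simp
      ring
    rw [h1]
    linarith
  -- barycentric coordinates
  set y : (EuclideanSpace ℝ (Fin (n + 1))) → Fin (n + 1) → ℝ := fun x j => x j / ε with hy
  have hycont : ∀ j, Continuous fun x : (EuclideanSpace ℝ (Fin (n + 1))) => y x j := by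
    intro j
    exact (EuclideanSpace.proj j).continuous.div_const ε
  -- choice of a vertex for each lattice point
  have hwv : ∀ v : Fin (n + 1) → ℤ, ∃ u : V,
      ∀ p : (Metric.sphere (0 : EuclideanSpace ℝ (Fin (n + 1))) 1), 0 < lam (y ↑p) v → 0 < fc p u := by
    intro v
    by_cases hv : ∃ p : (Metric.sphere (0 : EuclideanSpace ℝ (Fin (n + 1))) 1), 0 < lam (y ↑p) v
    · obtain ⟨p0, hp0⟩ := hv
      obtain ⟨w, hw⟩ := hLeb ↑p0 p0.2
      refine ⟨w, fun p hp => ?_⟩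
      have hdist : dist (↑p : (EuclideanSpace ℝ (Fin (n + 1)))) ↑p0 < δ := by
        have hcoord : ∀ j, |((↑p : (EuclideanSpace ℝ (Fin (n + 1)))) - ↑p0) j| ≤ 2 * ε := by
          intro j
          have b1 := abs_lt.1 (lam_pos_bound hp j)
          have b2 := abs_lt.1 (lam_pos_bound hp0 j)
          rw [hy] at b1 b2
          simp only at b1 b2
          have ea : ((↑p : (EuclideanSpace ℝ (Fin (n + 1)))) - ↑p0) j = ε * (((↑p : (EuclideanSpace ℝ (Fin (n + 1)))) j / ε - v j) - ((↑p0 : (EuclideanSpace ℝ (Fin (n + 1)))) j / ε - v j)) := by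
            have : ((↑p : (EuclideanSpace ℝ (Fin (n + 1)))) - ↑p0) j = (↑p : (EuclideanSpace ℝ (Fin (n + 1)))) j - (↑p0 : (EuclideanSpace ℝ (Fin (n + 1)))) j := rfl
            rw [this]
            field_simp
            ring
          rw [ea, abs_mul, abs_of_pos hεpos]
          have habs : |(((↑p : (EuclideanSpace ℝ (Fin (n + 1)))) j / ε - v j) - ((↑p0 : (EuclideanSpace ℝ (Fin (n + 1)))) j / ε - v j))| ≤ 2 := by
            rw [abs_le]
            constructor <;> [linarith [b1.1, b2.2]; linarith [b1.2, b2.1]]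
          nlinarith
        have hnorm : ‖(↑p : (EuclideanSpace ℝ (Fin (n + 1)))) - ↑p0‖ ≤ ((n : ℝ) + 1) * (2 * ε) := by
          have := norm_le_of_coord (m := n + 1) (x := ((↑p : (EuclideanSpace ℝ (Fin (n + 1)))) - ↑p0)) (c := 2 * ε)
            (by positivity) hcoord
          simpa using this
        rw [dist_eq_norm]
        exact lt_of_le_of_lt hnorm hεδ
      have hmem : (↑p : (EuclideanSpace ℝ (Fin (n + 1)))) ∈ O w := hw (Metric.mem_ball.2 hdist)
      have : p ∈ Subtype.val ⁻¹' O w := hmem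
      rw [hOpre w] at this
      exact this
    · exact ⟨v0, fun p hp => absurd ⟨p, hp⟩ hv⟩
  choose wv hwvspec using hwv
  -- the global lattice window
  set W : Finset (Fin (n + 1) → ℤ) :=
    Fintype.piFinset fun _ => Finset.Icc (-(⌈1 / ε⌉ + 2)) (⌈1 / ε⌉ + 2) with hW
  have hboxW : ∀ x : (EuclideanSpace ℝ (Fin (n + 1))), ‖x‖ ≤ 1 → box (y x) ⊆ W := by
    intro x hx v hv
    rw [box, Fintype.mem_piFinset] at hv
    rw [hW, Fintype.mem_piFinset]
    intro j
    have hxj : |x j| ≤ 1 := (coord_le_norm x j).trans hx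
    have hyj : |y x j| ≤ 1 / ε := by
      rw [hy]
      simp only
      rw [abs_div, abs_of_pos hεpos]
      gcongr
    have hfl : (-(⌈1 / ε⌉ + 1) : ℤ) ≤ ⌊y x j⌋ ∧ ⌊y x j⌋ ≤ ⌈1 / ε⌉ := by
      constructor
      · have : -(1 / ε) ≤ y x j := by
          have := abs_le.1 hyj
          linarith [this.1]
        have h2 : (-(⌈1 / ε⌉ + 1) : ℤ) ≤ ⌊(-(1 / ε) : ℝ)⌋ := by
          rw [Int.floor_neg]
          have : ⌈(1 / ε : ℝ)⌉ ≤ ⌈1 / ε⌉ + 1 := by omega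
          omega
        exact le_trans h2 (Int.floor_mono this)
      · have : y x j ≤ 1 / ε := (abs_le.1 hyj).2
        calc ⌊y x j⌋ ≤ ⌊(1 / ε : ℝ)⌋ := Int.floor_mono this
          _ ≤ ⌈(1 / ε : ℝ)⌉ := Int.floor_le_ceil _
    rw [Finset.mem_Icc]
    rcases Finset.mem_insert.1 (hv j) with h | h
    · omega
    · rw [Finset.mem_singleton] at h
      omega
  -- the map into the complex
  set φ : (EuclideanSpace ℝ (Fin (n + 1))) → V → ℝ := fun x u => ∑ v ∈ W, if wv v = u then lam (y x) v else 0 with hφ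
  have hφcont : Continuous φ := by
    apply continuous_pi
    intro u
    apply continuous_finset_sum
    intro v _
    by_cases h : wv v = u
    · simp only [h, if_true]
      exact lam_continuous y hycont v
    · simp only [h, if_false]
      exact continuous_const
  have hφnn : ∀ (x : (EuclideanSpace ℝ (Fin (n + 1)))) (u : V), 0 ≤ φ x u := by
    intro x u
    apply Finset.sum_nonneg
    intro v _
    split
    · exact lam_nonneg _ _
    · exact le_refl 0
  have hWsum : ∀ x : (EuclideanSpace ℝ (Fin (n + 1))), ‖x‖ ≤ 1 → ∑ v ∈ W, lam (y x) v = 1 := by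
    intro x hx
    rw [← lam_sum (y x)]
    symm
    apply Finset.sum_subset (hboxW x hx)
    intro v _ hvb
    by_contra h
    exact hvb (lam_mem_box h)
  have hφsum : ∀ x : (EuclideanSpace ℝ (Fin (n + 1))), ‖x‖ ≤ 1 → ∑ u, φ x u = 1 := by
    intro x hx
    rw [hφ]
    simp only
    rw [Finset.sum_comm]
    rw [← hWsum x hx]
    apply Finset.sum_congr rfl
    intro v _
    rw [Finset.sum_ite_eq Finset.univ (wv v) (fun _ => lam (y x) v)]
    simp
  set Sx : (EuclideanSpace ℝ (Fin (n + 1))) → Finset V := fun x => (W.filter fun v => 0 < lam (y x) v).image wv with hSx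
  have hSx0 : ∀ (x : (EuclideanSpace ℝ (Fin (n + 1)))) (u : V), u ∉ Sx x → φ x u = 0 := by
    intro x u hu
    rw [hφ]
    simp only
    apply Finset.sum_eq_zero
    intro v hv
    split
    next heq =>
      by_contra hne
      have hpos : 0 < lam (y x) v := lt_of_le_of_ne (lam_nonneg _ _) (Ne.symm hne)
      exact hu (Finset.mem_image.2 ⟨v, Finset.mem_filter.2 ⟨hv, hpos⟩, heq⟩)
    next => rfl
  have hSxcard : ∀ x : (EuclideanSpace ℝ (Fin (n + 1))), (Sx x).card ≤ n + 2 := by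
    intro x
    rw [hSx]
    simp only
    apply le_trans Finset.card_image_le
    have := lam_card_le (y x) (W.filter fun v => 0 < lam (y x) v)
      (fun v hv => (Finset.mem_filter.1 hv).2)
    simpa using this
  have hSxne : ∀ x : (EuclideanSpace ℝ (Fin (n + 1))), ‖x‖ ≤ 1 → (Sx x).Nonempty := by
    intro x hx
    have hs := hφsum x hx
    have : ∃ u, φ x u ≠ 0 := by
      by_contra hc
      push_neg at hc
      rw [Finset.sum_eq_zero (fun u _ => hc u)] at hs
      exact one_ne_zero hs.symm
    obtain ⟨u, hu⟩ := this
    by_contra hc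
    rw [Finset.not_nonempty_iff_eq_empty] at hc
    exact hu (hSx0 x u (by rw [hc]; exact Finset.notMem_empty u))
  have hφmem : ∀ x : (EuclideanSpace ℝ (Fin (n + 1))), ‖x‖ ≤ 1 → φ x ∈ realization K := by
    intro x hx
    exact ⟨hφnn x, hφsum x hx, Sx x,
      hneighborly _ (hSxne x hx) (le_trans (hSxcard x) hni), hSx0 x⟩
  -- the retraction data
  set Nn : (EuclideanSpace ℝ (Fin (n + 1))) → (EuclideanSpace ℝ (Fin (n + 1))) := fun x => (max ‖x‖ 2⁻¹)⁻¹ • x with hNn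
  have hmaxpos : ∀ x : (EuclideanSpace ℝ (Fin (n + 1))), (0 : ℝ) < max ‖x‖ 2⁻¹ :=
    fun x => lt_of_lt_of_le (by norm_num) (le_max_right _ _)
  have hNncont : Continuous Nn := by
    refine Continuous.smul (f := fun x : EuclideanSpace ℝ (Fin (n + 1)) => (max ‖x‖ 2⁻¹)⁻¹) (g := id) ?_ ?_
    · exact ((continuous_norm.max continuous_const).inv₀ fun x => (hmaxpos x).ne')
    · exact continuous_id
  have hNnball : ∀ x : (EuclideanSpace ℝ (Fin (n + 1))), ‖x‖ ≤ 1 → ‖Nn x‖ ≤ 1 := by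
    intro x hx
    rw [hNn]
    simp only
    rw [norm_smul, Real.norm_eq_abs, abs_inv, abs_of_pos (hmaxpos x)]
    calc (max ‖x‖ 2⁻¹)⁻¹ * ‖x‖ ≤ (max ‖x‖ 2⁻¹)⁻¹ * max ‖x‖ 2⁻¹ := by
          gcongr
          exact le_max_left _ _
      _ = 1 := inv_mul_cancel₀ (hmaxpos x).ne'
  have hNnsphere : ∀ x : (EuclideanSpace ℝ (Fin (n + 1))), 2⁻¹ ≤ ‖x‖ → Nn x = ‖x‖⁻¹ • x := by
    intro x hx
    rw [hNn]
    simp only [max_eq_left hx]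
  set fbar : (EuclideanSpace ℝ (Fin (n + 1))) → V → ℝ := fun x =>
    if hx : x = (0 : (EuclideanSpace ℝ (Fin (n + 1)))) then (fun _ => 0) else
      fc ⟨‖x‖⁻¹ • x, by
        rw [mem_sphere_zero_iff_norm, norm_smul, norm_inv, norm_norm]
        exact inv_mul_cancel₀ (norm_ne_zero_iff.2 hx)⟩ with hfbar
  set tf : (EuclideanSpace ℝ (Fin (n + 1))) → ℝ := fun x => max 0 (2 * ‖x‖ - 1) with htf
  have htfcont : Continuous tf :=
    continuous_const.max ((continuous_norm.const_smul (2:ℝ)).sub continuous_const)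
  set gfun : (EuclideanSpace ℝ (Fin (n + 1))) → V → ℝ := fun x => tf x • fbar x + (1 - tf x) • φ (Nn x) with hgfun
  -- continuity of the glued map
  have hg2cont : Continuous fun x : (EuclideanSpace ℝ (Fin (n + 1))) => (1 - tf x) • φ (Nn x) :=
    (continuous_const.sub htfcont).smul (hφcont.comp hNncont)
  have hfbarOn : ContinuousOn fbar {x : (EuclideanSpace ℝ (Fin (n + 1))) | x ≠ 0} := by
    rw [continuousOn_iff_continuous_restrict]
    have hres : Set.restrict {x : (EuclideanSpace ℝ (Fin (n + 1))) | x ≠ 0} fbar = fun z : ↥{x : (EuclideanSpace ℝ (Fin (n + 1))) | x ≠ 0} =>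
        fc ⟨‖(z : (EuclideanSpace ℝ (Fin (n + 1))))‖⁻¹ • (z : (EuclideanSpace ℝ (Fin (n + 1)))), by
          rw [mem_sphere_zero_iff_norm, norm_smul, norm_inv, norm_norm]
          exact inv_mul_cancel₀ (norm_ne_zero_iff.2 z.2)⟩ := by
      funext z
      simp only [Set.restrict_apply, hfbar]
      exact dif_neg z.2
    rw [show Set.domRestrict {x : (EuclideanSpace ℝ (Fin (n + 1))) | x ≠ 0} fbar = _ from hres]
    apply hfccont.comp
    apply Continuous.subtype_mk
    refine Continuous.smul (f := fun z : ↥{x : (EuclideanSpace ℝ (Fin (n + 1))) | x ≠ 0} => ‖(z : (EuclideanSpace ℝ (Fin (n + 1))))‖⁻¹) ?_ continuous_subtype_val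
    refine Continuous.inv₀ continuous_subtype_val.norm ?_
    intro z
    exact norm_ne_zero_iff.2 z.2
  have hg1cont : Continuous fun x : (EuclideanSpace ℝ (Fin (n + 1))) => tf x • fbar x := by
    rw [continuous_iff_continuousAt]
    intro x0
    rcases eq_or_ne x0 0 with rfl | hx0
    · have hev : (fun x : (EuclideanSpace ℝ (Fin (n + 1))) => tf x • fbar x) =ᶠ[nhds (0 : (EuclideanSpace ℝ (Fin (n + 1))))] fun _ => (0 : V → ℝ) := by
        apply Filter.eventuallyEq_of_mem (Metric.ball_mem_nhds (0 : (EuclideanSpace ℝ (Fin (n + 1)))) (by norm_num : (0:ℝ) < 2⁻¹))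
        intro x hx
        have hxn : ‖x‖ < 2⁻¹ := mem_ball_zero_iff.1 hx
        have htf0 : tf x = 0 := max_eq_left (by linarith)
        simp [htf0]
      exact continuousAt_const.congr hev.symm
    · refine ContinuousOn.continuousAt (s := {x : (EuclideanSpace ℝ (Fin (n + 1))) | x ≠ 0}) ?_ ?_
      · exact (htfcont.continuousOn).smul hfbarOn
      · exact (isOpen_ne).mem_nhds hx0
  have hgcont : Continuous gfun := by
    rw [hgfun]; exact hg1cont.add hg2cont
  -- membership of the glued map
  have hmemg : ∀ x : (EuclideanSpace ℝ (Fin (n + 1))), ‖x‖ ≤ 1 → gfun x ∈ realization K := by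
    intro x hx
    rcases le_or_gt ‖x‖ 2⁻¹ with hsmall | hbig
    · have htf0 : tf x = 0 := max_eq_left (by linarith)
      have hge : gfun x = φ (Nn x) := by rw [hgfun]; simp [htf0]
      rw [hge]
      exact hφmem _ (hNnball x hx)
    · have hx0 : x ≠ 0 := by
        intro h; rw [h, norm_zero] at hbig; norm_num at hbig
      have hpmem : ‖x‖⁻¹ • x ∈ (Metric.sphere (0 : EuclideanSpace ℝ (Fin (n + 1))) 1) := by
        rw [mem_sphere_zero_iff_norm, norm_smul, norm_inv, norm_norm]
        exact inv_mul_cancel₀ (norm_ne_zero_iff.2 hx0)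
      set p : ↥(Metric.sphere (0 : EuclideanSpace ℝ (Fin (n + 1))) 1) := (⟨‖x‖⁻¹ • x, hpmem⟩ : ↥(Metric.sphere (0 : EuclideanSpace ℝ (Fin (n + 1))) 1)) with hp
      have hfb : fbar x = fc p := by
        rw [hfbar]; simp only; rw [dif_neg hx0]
      have hNp : Nn x = ↑p := by rw [hNnsphere x hbig.le]
      have htf1 : 0 ≤ tf x := le_max_left _ _
      have htf2 : tf x ≤ 1 := max_le (by norm_num) (by linarith)
      have hpnorm : ‖(↑p : (EuclideanSpace ℝ (Fin (n + 1))))‖ = 1 :=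
        mem_sphere_zero_iff_norm.1 p.2
      obtain ⟨hpn, hps, S0, hKS0, hS0⟩ := (f p).2
      refine ⟨?_, ?_, S0, hKS0, ?_⟩
      · intro u
        rw [hgfun]
        simp only [Pi.add_apply, Pi.smul_apply, smul_eq_mul]
        have h1 : 0 ≤ fbar x u := by rw [hfb]; exact hpn u
        have h2 : 0 ≤ φ (Nn x) u := hφnn _ u
        have h3 : 0 ≤ 1 - tf x := by linarith
        exact add_nonneg (mul_nonneg htf1 h1) (mul_nonneg h3 h2)
      · rw [hgfun]
        simp only [Pi.add_apply, Pi.smul_apply, smul_eq_mul]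
        rw [Finset.sum_add_distrib, ← Finset.mul_sum, ← Finset.mul_sum, hfb, hNp]
        have e1 : ∑ u, fc p u = 1 := hps
        rw [e1, hφsum (↑p) (le_of_eq hpnorm)]
        ring
      · intro u hu
        rw [hgfun]
        simp only [Pi.add_apply, Pi.smul_apply, smul_eq_mul]
        rw [hfb, hNp]
        have h1 : fc p u = 0 := hS0 u hu
        have h2 : φ (↑p) u = 0 := by
          rw [hφ]
          simp only
          apply Finset.sum_eq_zero
          intro v hv
          split
          next heq =>
            by_contra hne
            have hpos : 0 < lam (y ↑p) v := lt_of_le_of_ne (lam_nonneg _ _) (Ne.symm hne)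
            have hwp := hwvspec v p hpos
            rw [heq, h1] at hwp
            exact lt_irrefl 0 hwp
          next => rfl
        rw [h1, h2]
        ring
  -- assemble the continuous extension
  refine ⟨⟨fun q => ⟨gfun ↑q, hmemg ↑q (mem_closedBall_zero_iff.1 q.2)⟩, ?_⟩, ?_⟩
  · exact Continuous.subtype_mk (hgcont.comp continuous_subtype_val) _
  · intro x hx
    apply Subtype.ext
    simp only [ContinuousMap.coe_mk]
    have hx1 : ‖x‖ = 1 := mem_sphere_zero_iff_norm.1 hx
    have hx0 : x ≠ 0 := by intro h; rw [h, norm_zero] at hx1; norm_num at hx1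
    have htf1 : tf x = 1 := by
      rw [htf]; simp only; rw [hx1]; norm_num
    rw [hgfun]
    simp only
    rw [htf1, one_smul, sub_self, zero_smul, add_zero]
    rw [hfbar]
    simp only
    rw [dif_neg hx0]
    have hsmul : ‖x‖⁻¹ • x = x := by rw [hx1, inv_one, one_smul]
    have hkey : ∀ h : ‖x‖⁻¹ • x ∈ Metric.sphere (0 : EuclideanSpace ℝ (Fin (n + 1))) 1,
        fc ⟨‖x‖⁻¹ • x, h⟩ = fc ⟨x, hx⟩ := by
      intro h
      have heq : (⟨‖x‖⁻¹ • x, h⟩ :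
          ↥(Metric.sphere (0 : EuclideanSpace ℝ (Fin (n + 1))) 1)) = ⟨x, hx⟩ :=
        Subtype.ext hsmul
      rw [heq]
    exact hkey _
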